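/- Let G be a subgraph of a fullerene graph F with k pentagonal faces, and let 𝓗 be a Clar set of the hexagon extension H[G]. Then |U_𝓗(G)| ≥ k. -/

import Mathlib

namespace FG

/-- A combinatorial plane (spherically embedded) graph: a finite simple graph together with
its collection of faces, each face recorded as the finset of edges of its boundary cycle.
Every face boundary is a cycle, every edge lies on exactly two faces, and Euler's formula
holds (edges are counted via the face incidences). -/
structure PlaneGraph (V : Type) [Fintype V] [DecidableEq V] : Type where
  graph : SimpleGraph V
  faces : Finset (Finset (Sym2 V))
  face_edges : ∀ f ∈ faces, ∀ e ∈ f, e ∈ graph.edgeSet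
  face_cycle : ∀ f ∈ faces, ∃ (v : V) (c : graph.Walk v v), c.IsCycle ∧ c.edges.toFinset = f
  edge_faces : ∀ e ∈ graph.edgeSet, (faces.filter (fun f => e ∈ f)).card = 2
  euler : 2 * (Fintype.card V + faces.card) = (∑ f ∈ faces, f.card) + 4

variable {V : Type} [Fintype V] [DecidableEq V]

/-- The vertices incident with at least one edge of an edge set. -/
def edgeVerts (E : Finset (Sym2 V)) : Finset V :=
  Finset.univ.filter fun v => ∃ e ∈ E, v ∈ e

/-- The degree of a vertex in the subgraph spanned by an edge set. -/
def deg (E : Finset (Sym2 V)) (v : V) : ℕ := (E.filter fun e => v ∈ e).card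

/-- The vertices covered by a collection of faces. -/
def facesVerts (H : Finset (Finset (Sym2 V))) : Finset V := edgeVerts (H.sup id)

/-- An edge set is a matching: non-loop edges, pairwise vertex-disjoint. -/
def IsMatching (M : Finset (Sym2 V)) : Prop :=
  (∀ e ∈ M, ¬e.IsDiag) ∧ ∀ e ∈ M, ∀ e' ∈ M, e ≠ e' → ∀ v : V, v ∈ e → v ∉ e'

/-- A fullerene graph: a cubic 3-connected plane graph with (exactly 12) pentagonal
faces and hexagonal faces. -/
structure IsFullerene (P : PlaneGraph V) : Prop where
  cubic : ∀ v : V, (P.graph.neighborSet v).ncard = 3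
  threeConnected : ∀ s : Set V, s.ncard ≤ 2 → (SimpleGraph.induce sᶜ P.graph).Connected
  faceSize : ∀ f ∈ P.faces, f.card = 5 ∨ f.card = 6
  pentTwelve : (P.faces.filter fun f => f.card = 5).card = 12

/-- A fragment of a plane graph: a nonempty set of faces (a cycle together with its
interior) whose boundary — the set of edges lying on exactly one chosen face — is a
single cycle. -/
structure Fragment (P : PlaneGraph V) : Type where
  inFaces : Finset (Finset (Sym2 V))
  nonempty : inFaces.Nonempty
  subFaces : inFaces ⊆ P.faces
  boundary_cycle : ∃ (v : V) (c : P.graph.Walk v v), c.IsCycle ∧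
    c.edges.toFinset =
      (inFaces.sup id).filter fun e => (inFaces.filter fun f => e ∈ f).card = 1

/-- The edge set of a fragment. -/
def Fragment.edges {P : PlaneGraph V} (B : Fragment P) : Finset (Sym2 V) := B.inFaces.sup id

/-- The boundary edges of a fragment. -/
def Fragment.boundary {P : PlaneGraph V} (B : Fragment P) : Finset (Sym2 V) :=
  B.edges.filter fun e => (B.inFaces.filter fun f => e ∈ f).card = 1

/-- A pentagonal fragment: all inner faces are pentagons. -/
def IsPentagonalFragment {P : PlaneGraph V} (B : Fragment P) : Prop :=
  ∀ f ∈ B.inFaces, f.card = 5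

/-- The faces of `P` adjoining the subgraph with edge set `E`: not a face of the
subgraph, but sharing at least one edge with it. -/
def adjoiningFaces (P : PlaneGraph V) (E : Finset (Sym2 V)) : Finset (Finset (Sym2 V)) :=
  P.faces.filter fun f => ¬f ⊆ E ∧ (f ∩ E).Nonempty

/-- The territory `T[G]` of the subgraph with edge set `E`: the subgraph together with
all adjoining faces. -/
def territoryEdges (P : PlaneGraph V) (E : Finset (Sym2 V)) : Finset (Sym2 V) :=
  E ∪ (adjoiningFaces P E).sup id

/-- `w(G)`: the number of 2-degree vertices of the subgraph spanned by `E`. -/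
def wcount (E : Finset (Sym2 V)) : ℕ := ((edgeVerts E).filter fun v => deg E v = 2).card

/-- A subgraph is maximal in `P` when its hexagon extension is contained in `P`,
i.e. every adjoining face is a hexagon. -/
def IsMaximalIn (P : PlaneGraph V) (E : Finset (Sym2 V)) : Prop :=
  ∀ f ∈ adjoiningFaces P E, f.card = 6

/-- `H ∈ 𝒮(G)` for the subgraph `G` with edge set `E`: `H` is a set of mutually disjoint
hexagons of the hexagon extension `H[G]` (hexagonal faces sharing at least one edge with
`G`) such that `G − H` has a matching covering all remaining 3-degree vertices of `G`. -/
def SextetAdm (P : PlaneGraph V) (E : Finset (Sym2 V)) (H : Finset (Finset (Sym2 V))) : Prop :=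
  (∀ f ∈ H, f ∈ P.faces ∧ f.card = 6 ∧ (f ∩ E).Nonempty) ∧
  (∀ f ∈ H, ∀ g ∈ H, f ≠ g → Disjoint (edgeVerts f) (edgeVerts g)) ∧
  ∃ M : Finset (Sym2 V), M ⊆ E ∧ IsMatching M ∧
    (∀ e ∈ M, ∀ v : V, v ∈ e → v ∉ facesVerts H) ∧
    ∀ v ∈ edgeVerts E, deg E v = 3 → v ∉ facesVerts H → ∃ e ∈ M, v ∈ e

/-- `U_H(G) = V(G) ∖ V(H)`. -/
def Uset (E : Finset (Sym2 V)) (H : Finset (Finset (Sym2 V))) : Finset V :=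
  edgeVerts E \ facesVerts H

/-- A Clar set of `H[G]`: a member of `𝒮(G)` minimizing `|U_H(G)|`. -/
def IsClarSet (P : PlaneGraph V) (E : Finset (Sym2 V)) (H : Finset (Finset (Sym2 V))) : Prop :=
  SextetAdm P E H ∧ ∀ H', SextetAdm P E H' → (Uset E H).card ≤ (Uset E H').card

/-- A normal Clar set: a Clar set such that `G − H` has a perfect matching. -/
def IsNormalClarSet (P : PlaneGraph V) (E : Finset (Sym2 V))
    (H : Finset (Finset (Sym2 V))) : Prop :=
  IsClarSet P E H ∧ ∃ M : Finset (Sym2 V), M ⊆ E ∧ IsMatching M ∧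
    (∀ e ∈ M, ∀ v : V, v ∈ e → v ∉ facesVerts H) ∧
    ∀ v ∈ Uset E H, ∃ e ∈ M, v ∈ e

/-- The pentagonal faces of the subgraph with edge set `E`. -/
def pentFaces (P : PlaneGraph V) (E : Finset (Sym2 V)) : Finset (Finset (Sym2 V)) :=
  P.faces.filter fun f => f.card = 5 ∧ f ⊆ E

/-- A subgraph with `k` pentagons is extremal if `|U_H(G)| = k` for a Clar set `H`. -/
def IsExtremalSub (P : PlaneGraph V) (E : Finset (Sym2 V)) : Prop :=
  ∃ H, IsClarSet P E H ∧ (Uset E H).card = (pentFaces P E).card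

/-- A pentagonal ring `R_k`: `k` pentagonal faces `R 0, …, R (k-1)` such that
`R i` and `R j` intersect iff `|i − j| = 1 (mod k)`. -/
def IsPentRing (P : PlaneGraph V) (k : ℕ) (R : ZMod k → Finset (Sym2 V)) : Prop :=
  Function.Injective R ∧ (∀ i, R i ∈ P.faces ∧ (R i).card = 5) ∧
  ∀ i j : ZMod k, i ≠ j →
    ((edgeVerts (R i) ∩ edgeVerts (R j)).Nonempty ↔ (j = i + 1 ∨ i = j + 1))

/-- The number of pentagons of the pentagonal fragment `B` adjoining (sharing an edge
with) the pentagon `p`. -/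
def pentAdjCount {P : PlaneGraph V} (B : Fragment P) (p : Finset (Sym2 V)) : ℕ :=
  (B.inFaces.filter fun q => q ≠ p ∧ (q ∩ p).Nonempty).card

/-- The fragment consisting of a single pentagon `P`. -/
def IsPentagonFrag {P : PlaneGraph V} (B : Fragment P) : Prop :=
  IsPentagonalFragment B ∧ B.inFaces.card = 1

/-- `B_2`: the extremal pentagonal fragment with 4 pentagons whose Clar extension is
normal. -/
def IsB2Frag {P : PlaneGraph V} (B : Fragment P) : Prop :=
  IsPentagonalFragment B ∧ B.inFaces.card = 4 ∧ IsExtremalSub P B.edges ∧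
    ∃ H, IsNormalClarSet P B.edges H

/-- `B_3`: the extremal pentagonal fragment with 6 pentagons whose Clar extension is
normal. -/
def IsB3Frag {P : PlaneGraph V} (B : Fragment P) : Prop :=
  IsPentagonalFragment B ∧ B.inFaces.card = 6 ∧ IsExtremalSub P B.edges ∧
    ∃ H, IsNormalClarSet P B.edges H

/-- A pasting edge of the subgraph with edge set `E`: an edge of `E` lying on the
boundary of the Clar extension `C[G]` (not an edge of a Clar hexagon) whose two
end-vertices belong to `V(H)` for a Clar set `H`. -/
def IsPastingEdge (P : PlaneGraph V) (E : Finset (Sym2 V)) (e : Sym2 V) : Prop :=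
  e ∈ E ∧ ∃ H, IsClarSet P E H ∧ (∀ v : V, v ∈ e → v ∈ facesVerts H) ∧ e ∉ H.sup id

/-- `B` arises from pasting `A` and `C` along a common pasting edge:
`B = A ∪ C` and `A ∩ C` is a single pasting edge of both. -/
def IsPasting {P : PlaneGraph V} (B A C : Fragment P) : Prop :=
  B.inFaces = A.inFaces ∪ C.inFaces ∧
  ∃ e : Sym2 V, A.edges ∩ C.edges = {e} ∧ IsPastingEdge P A.edges e ∧ IsPastingEdge P C.edges e

def IsBasicFrag {P : PlaneGraph V} (B : Fragment P) : Prop :=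
  IsPentagonFrag B ∨ IsB2Frag B ∨ IsB3Frag B

/-- The pentagonal fragments generated from `P`, `B_2`, `B_3` by the pasting operation. -/
inductive Pasted (P : PlaneGraph V) : Fragment P → Prop
  | base (B : Fragment P) : IsBasicFrag B → Pasted P B
  | paste (B A C : Fragment P) : Pasted P A → IsBasicFrag C → IsPasting B A C → Pasted P B

/-- `P ∗ P`. -/
def IsPPFrag {P : PlaneGraph V} (B : Fragment P) : Prop :=
  ∃ A C : Fragment P, IsPentagonFrag A ∧ IsPentagonFrag C ∧ IsPasting B A C

/-- `P ∗ B_2`. -/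
def IsPB2Frag {P : PlaneGraph V} (B : Fragment P) : Prop :=
  ∃ A C : Fragment P, IsPentagonFrag A ∧ IsB2Frag C ∧ IsPasting B A C

/-- `P ∗ B_2 ∗ P`. -/
def IsPB2PFrag {P : PlaneGraph V} (B : Fragment P) : Prop :=
  ∃ B' A C D : Fragment P, IsPentagonFrag A ∧ IsB2Frag C ∧ IsPentagonFrag D ∧
    IsPasting B' A C ∧ IsPasting B B' D

/-- The six members of `𝓑_{≥60}`. -/
def SixShapes {P : PlaneGraph V} (B : Fragment P) : Prop :=
  IsPentagonFrag B ∨ IsB2Frag B ∨ IsB3Frag B ∨ IsPPFrag B ∨ IsPB2Frag B ∨ IsPB2PFrag B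

/-- `B_1`: two vertex-disjoint pentagons joined by an edge. -/
def IsB1 (P : PlaneGraph V) (E : Finset (Sym2 V)) : Prop :=
  ∃ (f g : Finset (Sym2 V)) (a b : V), f ∈ P.faces ∧ g ∈ P.faces ∧ f.card = 5 ∧ g.card = 5 ∧
    Disjoint (edgeVerts f) (edgeVerts g) ∧ P.graph.Adj a b ∧
    a ∈ edgeVerts f ∧ b ∈ edgeVerts g ∧ E = f ∪ g ∪ {s(a, b)}

/-- `B_1^k`: `k` copies of `B_1` pasted together along pasting edges of their pentagons. -/
inductive B1Pow (P : PlaneGraph V) : ℕ → Finset (Sym2 V) → Prop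
  | one (E : Finset (Sym2 V)) : IsB1 P E → B1Pow P 1 E
  | succ (k : ℕ) (E X : Finset (Sym2 V)) (e : Sym2 V) (f g : Finset (Sym2 V)) :
      B1Pow P k E → IsB1 P X → E ∩ X = {e} → f ∈ P.faces → g ∈ P.faces →
      f.card = 5 → g.card = 5 → f ⊆ E → g ⊆ X → e ∈ f → e ∈ g →
      IsPastingEdge P f e → IsPastingEdge P g e → B1Pow P (k + 1) (E ∪ X)

/-- `F` contains `B_1^k` for some `2 ≤ k ≤ 4` as a subgraph. -/
def ContainsB1Pow (P : PlaneGraph V) : Prop :=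
  ∃ (k : ℕ) (E : Finset (Sym2 V)), 2 ≤ k ∧ k ≤ 4 ∧ B1Pow P k E

/-- A perfect matching of the plane graph `P`. -/
def IsPerfectMatching (P : PlaneGraph V) (M : Finset (Sym2 V)) : Prop :=
  (∀ e ∈ M, e ∈ P.graph.edgeSet) ∧ IsMatching M ∧ ∀ v : V, ∃ e ∈ M, v ∈ e

/-- A sextet pattern of `P`: mutually disjoint hexagonal faces, all alternating with
respect to a common perfect matching. -/
def IsSextetPattern (P : PlaneGraph V) (H : Finset (Finset (Sym2 V))) : Prop :=
  (∀ f ∈ H, f ∈ P.faces ∧ f.card = 6) ∧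
  (∀ f ∈ H, ∀ g ∈ H, f ≠ g → Disjoint (edgeVerts f) (edgeVerts g)) ∧
  ∃ M : Finset (Sym2 V), IsPerfectMatching P M ∧ ∀ f ∈ H, (f ∩ M).card = 3

/-- A Clar formula: a maximum sextet pattern. -/
def IsClarFormula (P : PlaneGraph V) (H : Finset (Finset (Sym2 V))) : Prop :=
  IsSextetPattern P H ∧ ∀ H', IsSextetPattern P H' → H'.card ≤ H.card

/-- An extremal fullerene graph: the Clar number equals `(n − 12)/6`. -/
def IsExtremalFullerene (P : PlaneGraph V) : Prop :=
  ∃ H, IsClarFormula P H ∧ 6 * H.card = Fintype.card V - 12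

/-- The edges of the union of all maximal pentagonal fragments of `P`. -/
noncomputable def maxPentEdges (P : PlaneGraph V) : Finset (Sym2 V) :=
  @Finset.filter _
    (fun e => ∃ B : Fragment P, IsPentagonalFragment B ∧ IsMaximalIn P B.edges ∧ e ∈ B.edges)
    (Classical.decPred _) (P.faces.sup id)

/-- The disjoint union of two copies of `K_2`. -/
def twoK2 : SimpleGraph (Fin 4) := SimpleGraph.fromEdgeSet {s(0, 1), s(2, 3)}

/-- The tree `T_0` on six vertices: two adjacent 3-degree vertices, each also adjacent
to two leaves. -/
def treeT0 : SimpleGraph (Fin 6) :=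
  SimpleGraph.fromEdgeSet {s(0, 1), s(0, 2), s(0, 3), s(1, 4), s(1, 5)}



/-! ### Auxiliary lemmas for Statement 3 -/

section Aux

lemma mem_edgeVerts {E : Finset (Sym2 V)} {v : V} :
    v ∈ edgeVerts E ↔ ∃ e ∈ E, v ∈ e := by
  simp [edgeVerts]

lemma edgeVerts_mono {E F : Finset (Sym2 V)} (h : E ⊆ F) : edgeVerts E ⊆ edgeVerts F := by
  intro v hv
  rcases mem_edgeVerts.mp hv with ⟨e, he, hve⟩
  exact mem_edgeVerts.mpr ⟨e, h he, hve⟩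

lemma deg_mono {E F : Finset (Sym2 V)} (h : E ⊆ F) (v : V) : deg E v ≤ deg F v :=
  Finset.card_le_card (Finset.filter_subset_filter _ h)

lemma deg_eq_zero {E : Finset (Sym2 V)} {v : V} (hv : v ∉ edgeVerts E) : deg E v = 0 := by
  unfold deg
  rw [Finset.card_eq_zero, Finset.filter_eq_empty_iff]
  intro e he hve
  exact hv (mem_edgeVerts.mpr ⟨e, he, hve⟩)

lemma sym2_card {e : Sym2 V} (he : ¬ e.IsDiag) :
    (Finset.univ.filter fun v => v ∈ e).card = 2 := by
  induction e with
  | _ a b =>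
    rw [Sym2.mk_isDiag_iff] at he
    have h : (Finset.univ.filter fun v => v ∈ s(a, b)) = {a, b} := by
      ext v; simp [Sym2.mem_iff]
    rw [h, Finset.card_pair he]

lemma sum_deg {S : Finset (Sym2 V)} (hS : ∀ e ∈ S, ¬ e.IsDiag) :
    ∑ v ∈ edgeVerts S, deg S v = 2 * S.card := by
  have h1 : ∑ v : V, deg S v = 2 * S.card := by
    unfold deg
    simp_rw [Finset.card_filter]
    rw [Finset.sum_comm]
    have h : ∀ e ∈ S, (∑ v : V, if v ∈ e then 1 else 0) = 2 := by
      intro e he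
      rw [← Finset.card_filter]
      exact sym2_card (hS e he)
    rw [Finset.sum_congr rfl h, Finset.sum_const, smul_eq_mul, mul_comm]
  rw [← h1]
  exact Finset.sum_subset (Finset.subset_univ _) (fun v _ hv => deg_eq_zero hv)

lemma card_edgeVerts {S : Finset (Sym2 V)} (hS : ∀ e ∈ S, ¬ e.IsDiag) {d : ℕ}
    (hd : ∀ v ∈ edgeVerts S, deg S v = d) : d * (edgeVerts S).card = 2 * S.card := by
  rw [← sum_deg hS, Finset.sum_congr rfl hd, Finset.sum_const, smul_eq_mul, mul_comm]

lemma path_countP_end {G : SimpleGraph V} {a b : V} (q : G.Walk a b)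
    (hq : q.IsPath) (hnil : ¬ q.Nil) :
    q.edges.countP (fun e => decide (b ∈ e)) = 1 := by
  induction q with
  | nil => exact absurd SimpleGraph.Walk.Nil.nil hnil
  | @cons a c b h q ih =>
    by_cases hq0 : q.Nil
    · cases hq0
      simp [SimpleGraph.Walk.edges_cons, List.countP_cons, Sym2.mem_iff]
    · have hp' : q.IsPath := hq.of_cons
      have hanotin : a ∉ q.support := ((SimpleGraph.Walk.cons_isPath_iff h q).mp hq).2
      have hba : b ≠ a := fun hba => hanotin (hba ▸ q.end_mem_support)
      have hbc : b ≠ c := by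
        rintro rfl
        exact hq0 (((SimpleGraph.Walk.isPath_iff_eq_nil (p := q)).mp hp') ▸ SimpleGraph.Walk.Nil.nil)
      rw [SimpleGraph.Walk.edges_cons, List.countP_cons, ih hp' hq0]
      simp [Sym2.mem_iff, hba, hbc]

lemma cycle_countP_start {G : SimpleGraph V} {v : V} (c : G.Walk v v) (hc : c.IsCycle) :
    c.edges.countP (fun e => decide (v ∈ e)) = 2 := by
  obtain ⟨u, h, q, rfl⟩ := SimpleGraph.Walk.not_nil_iff.mp hc.not_nil
  obtain ⟨hqp, -⟩ := (SimpleGraph.Walk.cons_isCycle_iff q h).mp hc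
  have hq0 : ¬ q.Nil := by
    intro h0
    cases h0
    exact G.irrefl h
  rw [SimpleGraph.Walk.edges_cons, List.countP_cons, path_countP_end q hqp hq0]
  simp [Sym2.mem_iff]

lemma nodup_toFinset_filter_card {l : List (Sym2 V)} (hl : l.Nodup)
    (p : Sym2 V → Prop) [DecidablePred p] :
    (l.toFinset.filter p).card = l.countP (fun e => decide (p e)) := by
  have h : l.toFinset.filter p = (l.filter (fun e => decide (p e))).toFinset := by
    rw [List.toFinset_filter]
    apply Finset.filter_congr
    intro x _
    simp
  rw [h, List.toFinset_card_of_nodup (hl.filter _), List.countP_eq_length_filter]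

lemma face_deg_two (P : PlaneGraph V) {f : Finset (Sym2 V)} (hf : f ∈ P.faces) {v : V}
    (hv : v ∈ edgeVerts f) : deg f v = 2 := by
  classical
  obtain ⟨w, c, hc, hce⟩ := P.face_cycle f hf
  obtain ⟨e, hef, hve⟩ := mem_edgeVerts.mp hv
  have hec : e ∈ c.edges := by
    rw [← hce] at hef
    exact List.mem_toFinset.mp hef
  have hvs : v ∈ c.support := by
    induction e with
    | _ x y =>
      rcases Sym2.mem_iff.mp hve with rfl | rfl
      · exact SimpleGraph.Walk.fst_mem_support_of_mem_edges c hec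
      · exact SimpleGraph.Walk.snd_mem_support_of_mem_edges c hec
  have hperm : (c.rotate v hvs).edges.Perm c.edges := (c.rotate_edges v hvs).perm
  have h2 : (c.rotate v hvs).edges.countP (fun e => decide (v ∈ e)) = 2 :=
    cycle_countP_start _ (hc.rotate hvs)
  have h3 := hperm.countP_eq (fun e => decide (v ∈ e))
  unfold deg
  rw [← hce, nodup_toFinset_filter_card hc.isCircuit.isTrail.edges_nodup, ← h3, h2]

lemma vertex_edges_three (P : PlaneGraph V) (hP : IsFullerene P) (v : V)
    {T : Finset (Sym2 V)} (hT : ∀ e, e ∈ T ↔ e ∈ P.graph.edgeSet ∧ v ∈ e) :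
    T.card = 3 := by
  classical
  have hfin : (P.graph.neighborSet v).Finite := Set.toFinite _
  have h3 : hfin.toFinset.card = 3 := by
    rw [← Set.ncard_eq_toFinset_card _ hfin]
    exact hP.cubic v
  rw [← h3]
  refine Finset.card_bij' (fun e he => Sym2.Mem.other' ((hT e).mp he).2)
    (fun w _ => s(v, w)) ?_ ?_ ?_ ?_
  · intro e he
    rw [Set.Finite.mem_toFinset]
    have hadj : s(v, Sym2.Mem.other' ((hT e).mp he).2) ∈ P.graph.edgeSet := by
      rw [Sym2.other_spec' ((hT e).mp he).2]
      exact ((hT e).mp he).1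
    exact (P.graph.mem_edgeSet).mp hadj
  · intro w hw
    rw [Set.Finite.mem_toFinset] at hw
    exact (hT _).mpr ⟨(P.graph.mem_edgeSet).mpr hw, Sym2.mem_mk_left v w⟩
  · intro e he
    exact Sym2.other_spec' ((hT e).mp he).2
  · intro w hw
    exact Sym2.congr_right.mp (Sym2.other_spec' _)

lemma faces_at_three (P : PlaneGraph V) (hP : IsFullerene P) (v : V) :
    (P.faces.filter fun f => v ∈ edgeVerts f).card = 3 := by
  classical
  have key : ∑ f ∈ P.faces, deg f v = 6 := by
    have h1 : ∀ f ∈ P.faces, deg f v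
        = ∑ e ∈ P.graph.edgeFinset, if e ∈ f ∧ v ∈ e then 1 else 0 := by
      intro f hf
      have hsub : f ⊆ P.graph.edgeFinset := fun e he =>
        SimpleGraph.mem_edgeFinset.mpr (P.face_edges f hf e he)
      unfold deg
      rw [Finset.card_filter, eq_comm,
        ← Finset.sum_subset hsub (fun e _ hef => by simp [hef])]
      exact Finset.sum_congr rfl (fun e he => by simp [he])
    rw [Finset.sum_congr rfl h1, Finset.sum_comm]
    have h2 : ∀ e ∈ P.graph.edgeFinset,
        (∑ f ∈ P.faces, if e ∈ f ∧ v ∈ e then 1 else 0) = if v ∈ e then 2 else 0 := by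
      intro e he
      by_cases hve : v ∈ e
      · simp only [hve, and_true, if_true]
        rw [← Finset.card_filter, P.edge_faces e (SimpleGraph.mem_edgeFinset.mp he)]
      · simp [hve]
    rw [Finset.sum_congr rfl h2]
    have h3 : ∑ e ∈ P.graph.edgeFinset, (if v ∈ e then 2 else 0)
        = 2 * deg P.graph.edgeFinset v := by
      unfold deg
      rw [Finset.card_filter, Finset.mul_sum]
      exact Finset.sum_congr rfl (fun e _ => by split <;> simp)
    have hv3 : deg P.graph.edgeFinset v = 3 :=
      vertex_edges_three P hP v (T := P.graph.edgeFinset.filter (fun e => v ∈ e))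
        (fun e => by simp [SimpleGraph.mem_edgeFinset])
    rw [h3, hv3]
  have hsplit : ∑ f ∈ P.faces, deg f v
      = ∑ f ∈ P.faces.filter (fun f => v ∈ edgeVerts f), deg f v := by
    symm
    apply Finset.sum_subset (Finset.filter_subset _ _)
    intro f hf hnf
    exact deg_eq_zero (fun hvf => hnf (Finset.mem_filter.mpr ⟨hf, hvf⟩))
  rw [hsplit] at key
  have hconst : ∀ f ∈ P.faces.filter (fun f => v ∈ edgeVerts f), deg f v = 2 := fun f hf =>
    face_deg_two P (Finset.mem_filter.mp hf).1 (Finset.mem_filter.mp hf).2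
  rw [Finset.sum_congr rfl hconst, Finset.sum_const, smul_eq_mul] at key
  omega

lemma pair_determines (P : PlaneGraph V) (hP : IsFullerene P) {f g : Finset (Sym2 V)}
    (hf : f ∈ P.faces) (hg : g ∈ P.faces) {v : V}
    (hvf : v ∈ edgeVerts f) (hvg : v ∈ edgeVerts g)
    (hpair : f.filter (fun e => v ∈ e) = g.filter (fun e => v ∈ e)) : f = g := by
  classical
  by_contra hne
  set Tv := P.graph.edgeFinset.filter (fun e => v ∈ e) with hTvdef
  have hTv : Tv.card = 3 :=
    vertex_edges_three P hP v (fun e => by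
      rw [hTvdef]
      simp [SimpleGraph.mem_edgeFinset])
  set pf := f.filter (fun e => v ∈ e) with hpfdef
  have hpf2 : pf.card = 2 := face_deg_two P hf hvf
  have hpfT : pf ⊆ Tv := by
    intro e he
    rcases Finset.mem_filter.mp he with ⟨hef, hve⟩
    exact Finset.mem_filter.mpr
      ⟨SimpleGraph.mem_edgeFinset.mpr (P.face_edges f hf e hef), hve⟩
  have hsd : (Tv \ pf).card = 1 := by
    rw [Finset.card_sdiff_of_subset hpfT, hTv, hpf2]
  obtain ⟨e3, he3⟩ := Finset.card_eq_one.mp hsd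
  have he3m : e3 ∈ Tv \ pf := he3 ▸ Finset.mem_singleton_self e3
  rcases Finset.mem_sdiff.mp he3m with ⟨he3T, he3pf⟩
  rcases Finset.mem_filter.mp he3T with ⟨he3E, hve3⟩
  have hFe : (P.faces.filter (fun X => e3 ∈ X)).card = 2 :=
    P.edge_faces e3 (SimpleGraph.mem_edgeFinset.mp he3E)
  have hfg : ({f, g} : Finset (Finset (Sym2 V))) ⊆ P.faces.filter (fun X => v ∈ edgeVerts X) := by
    intro X hX
    rcases Finset.mem_insert.mp hX with rfl | hX
    · exact Finset.mem_filter.mpr ⟨hf, hvf⟩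
    · rw [Finset.mem_singleton.mp hX]
      exact Finset.mem_filter.mpr ⟨hg, hvg⟩
  have hsub : P.faces.filter (fun X => e3 ∈ X)
      ⊆ (P.faces.filter (fun X => v ∈ edgeVerts X)) \ {f, g} := by
    intro X hX
    rcases Finset.mem_filter.mp hX with ⟨hXf, he3X⟩
    refine Finset.mem_sdiff.mpr ⟨Finset.mem_filter.mpr ⟨hXf, mem_edgeVerts.mpr ⟨e3, he3X, hve3⟩⟩, ?_⟩
    intro hXfg
    rcases Finset.mem_insert.mp hXfg with rfl | hXg
    · exact he3pf (Finset.mem_filter.mpr ⟨he3X, hve3⟩)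
    · rw [Finset.mem_singleton.mp hXg] at he3X
      apply he3pf
      rw [hpair]
      exact Finset.mem_filter.mpr ⟨he3X, hve3⟩
  have hcard := Finset.card_le_card hsub
  rw [hFe, Finset.card_sdiff_of_subset hfg, faces_at_three P hP v, Finset.card_pair hne] at hcard
  omega

lemma shared_deg_one (P : PlaneGraph V) (hP : IsFullerene P) {f g : Finset (Sym2 V)}
    (hf : f ∈ P.faces) (hg : g ∈ P.faces) (hne : f ≠ g) {v : V}
    (hvf : v ∈ edgeVerts f) (hvg : v ∈ edgeVerts g) :
    deg (f ∩ g) v = 1 := by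
  classical
  set pf := f.filter (fun e => v ∈ e) with hpfdef
  set pg := g.filter (fun e => v ∈ e) with hpgdef
  have hpf2 : pf.card = 2 := face_deg_two P hf hvf
  have hpg2 : pg.card = 2 := face_deg_two P hg hvg
  have hpne : pf ≠ pg := fun h => hne (pair_determines P hP hf hg hvf hvg h)
  set Tv := P.graph.edgeFinset.filter (fun e => v ∈ e) with hTvdef
  have hTv : Tv.card = 3 :=
    vertex_edges_three P hP v (fun e => by
      rw [hTvdef]
      simp [SimpleGraph.mem_edgeFinset])
  have hpfT : pf ⊆ Tv := by
    intro e he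
    rcases Finset.mem_filter.mp he with ⟨hef, hve⟩
    exact Finset.mem_filter.mpr
      ⟨SimpleGraph.mem_edgeFinset.mpr (P.face_edges f hf e hef), hve⟩
  have hpgT : pg ⊆ Tv := by
    intro e he
    rcases Finset.mem_filter.mp he with ⟨hef, hve⟩
    exact Finset.mem_filter.mpr
      ⟨SimpleGraph.mem_edgeFinset.mpr (P.face_edges g hg e hef), hve⟩
  have hU3 : (pf ∪ pg).card = 3 := by
    have hle : (pf ∪ pg).card ≤ 3 := hTv ▸ Finset.card_le_card (Finset.union_subset hpfT hpgT)
    rcases Nat.lt_or_ge (pf ∪ pg).card 3 with hlt | hge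
    · exfalso
      have h1 : pf = pf ∪ pg :=
        Finset.eq_of_subset_of_card_le Finset.subset_union_left (by omega)
      have h2 : pg = pf ∪ pg :=
        Finset.eq_of_subset_of_card_le Finset.subset_union_right (by omega)
      exact hpne (h1.trans h2.symm)
    · omega
  have hinter : (pf ∩ pg).card = 1 := by
    have := Finset.card_inter_add_card_union pf pg
    omega
  have hfin : (f ∩ g).filter (fun e => v ∈ e) = pf ∩ pg := by
    rw [hpfdef, hpgdef, ← Finset.filter_inter_distrib]
  unfold deg
  rw [hfin, hinter]

lemma shared_verts_eq (P : PlaneGraph V) (hP : IsFullerene P) {f g : Finset (Sym2 V)}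
    (hf : f ∈ P.faces) (hg : g ∈ P.faces) (hne : f ≠ g) :
    edgeVerts f ∩ edgeVerts g = edgeVerts (f ∩ g) := by
  ext v
  constructor
  · intro hv
    rcases Finset.mem_inter.mp hv with ⟨hvf, hvg⟩
    have h1 := shared_deg_one P hP hf hg hne hvf hvg
    have : ((f ∩ g).filter (fun e => v ∈ e)).Nonempty := by
      rw [← Finset.card_pos]
      unfold deg at h1
      omega
    obtain ⟨e, he⟩ := this
    rcases Finset.mem_filter.mp he with ⟨hefg, hve⟩
    exact mem_edgeVerts.mpr ⟨e, hefg, hve⟩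
  · intro hv
    rcases mem_edgeVerts.mp hv with ⟨e, hefg, hve⟩
    rcases Finset.mem_inter.mp hefg with ⟨hef, heg⟩
    exact Finset.mem_inter.mpr
      ⟨mem_edgeVerts.mpr ⟨e, hef, hve⟩, mem_edgeVerts.mpr ⟨e, heg, hve⟩⟩

lemma shared_verts_card (P : PlaneGraph V) (hP : IsFullerene P) {f g : Finset (Sym2 V)}
    (hf : f ∈ P.faces) (hg : g ∈ P.faces) (hne : f ≠ g) :
    (edgeVerts f ∩ edgeVerts g).card = 2 * (f ∩ g).card := by
  rw [shared_verts_eq P hP hf hg hne]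
  have hnd : ∀ e ∈ f ∩ g, ¬ e.IsDiag := fun e he =>
    SimpleGraph.not_isDiag_of_mem_edgeSet P.graph
      (P.face_edges f hf e (Finset.mem_inter.mp he).1)
  have hd : ∀ v ∈ edgeVerts (f ∩ g), deg (f ∩ g) v = 1 := by
    intro v hv
    have hv' : v ∈ edgeVerts f ∩ edgeVerts g := by
      rw [shared_verts_eq P hP hf hg hne]
      exact hv
    rcases Finset.mem_inter.mp hv' with ⟨hvf, hvg⟩
    exact shared_deg_one P hP hf hg hne hvf hvg
  have := card_edgeVerts hnd hd
  omega

lemma face_verts_card (P : PlaneGraph V) {f : Finset (Sym2 V)} (hf : f ∈ P.faces) :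
    (edgeVerts f).card = f.card := by
  have hnd : ∀ e ∈ f, ¬ e.IsDiag := fun e he =>
    SimpleGraph.not_isDiag_of_mem_edgeSet P.graph (P.face_edges f hf e he)
  have hd : ∀ v ∈ edgeVerts f, deg f v = 2 := fun v hv => face_deg_two P hf hv
  have := card_edgeVerts hnd hd
  omega

lemma mem_facesVerts {H : Finset (Finset (Sym2 V))} {v : V} :
    v ∈ facesVerts H ↔ ∃ h ∈ H, v ∈ edgeVerts h := by
  unfold facesVerts
  rw [mem_edgeVerts]
  constructor
  · rintro ⟨e, he, hve⟩
    rcases Finset.mem_sup.mp he with ⟨h, hh, heh⟩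
    exact ⟨h, hh, mem_edgeVerts.mpr ⟨e, heh, hve⟩⟩
  · rintro ⟨h, hh, hv⟩
    rcases mem_edgeVerts.mp hv with ⟨e, heh, hve⟩
    exact ⟨e, Finset.mem_sup.mpr ⟨h, hh, heh⟩, hve⟩

lemma pentagon_odd (P : PlaneGraph V) (hP : IsFullerene P) {f : Finset (Sym2 V)}
    (hf : f ∈ P.faces) (hf5 : f.card = 5) {H : Finset (Finset (Sym2 V))}
    (hHfaces : ∀ h ∈ H, h ∈ P.faces ∧ h.card = 6)
    (hHdisj : ∀ h ∈ H, ∀ h' ∈ H, h ≠ h' → Disjoint (edgeVerts h) (edgeVerts h')) :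
    Odd ((edgeVerts f \ facesVerts H).card) := by
  classical
  have hA5 : (edgeVerts f).card = 5 := by rw [face_verts_card P hf, hf5]
  have hsplit : edgeVerts f ∩ facesVerts H
      = H.biUnion (fun h => edgeVerts f ∩ edgeVerts h) := by
    ext v
    simp only [Finset.mem_inter, Finset.mem_biUnion, mem_facesVerts]
    tauto
  have hdisj : ∀ h ∈ H, ∀ h' ∈ H, h ≠ h' →
      Disjoint (edgeVerts f ∩ edgeVerts h) (edgeVerts f ∩ edgeVerts h') := by
    intro h hh h' hh' hne
    exact Finset.disjoint_of_subset_left Finset.inter_subset_right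
      (Finset.disjoint_of_subset_right Finset.inter_subset_right (hHdisj h hh h' hh' hne))
  have hcard : (edgeVerts f ∩ facesVerts H).card
      = ∑ h ∈ H, (edgeVerts f ∩ edgeVerts h).card := by
    rw [hsplit]
    exact Finset.card_biUnion hdisj
  have heven : Even ((edgeVerts f ∩ facesVerts H).card) := by
    rw [hcard]
    apply Finset.even_sum
    intro h hh
    rcases hHfaces h hh with ⟨hhf, hh6⟩
    have hne : f ≠ h := fun h' => by rw [h'] at hf5; omega
    rw [shared_verts_card P hP hf hhf hne]
    exact even_two_mul _
  have h1 : (edgeVerts f \ facesVerts H).card + (edgeVerts f ∩ facesVerts H).card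
      = (edgeVerts f).card := Finset.card_sdiff_add_card_inter _ _
  rcases heven with ⟨m, hm⟩
  rw [Nat.odd_iff]
  omega

end Aux

/-- Lemma 2.7. Let `G` be a subgraph of a fullerene graph `F` with `k`
pentagonal faces and let `H` be a Clar set of the hexagon extension `H[G]`. Then
`|U_H(G)| ≥ k`. -/
theorem statement_3 (P : PlaneGraph V) (hP : IsFullerene P) (E : Finset (Sym2 V))
    (hE : ∀ e ∈ E, e ∈ P.graph.edgeSet)
    (H : Finset (Finset (Sym2 V))) (hH : IsClarSet P E H) :
    (pentFaces P E).card ≤ (Uset E H).card := by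
  classical
  rcases hH with ⟨⟨hHfaces, hHdisj, M, hME, hMmatch, hMavoid, hMcover⟩, -⟩
  have hHfaces' : ∀ h ∈ H, h ∈ P.faces ∧ h.card = 6 :=
    fun h hh => ⟨(hHfaces h hh).1, (hHfaces h hh).2.1⟩
  -- witness predicate
  set Q : Finset (Sym2 V) → V → Prop := fun f w =>
    w ∈ Uset E H ∧ w ∈ edgeVerts f ∧
      ((∀ g ∈ pentFaces P E, w ∈ edgeVerts g → g = f) ∨ (∃ e ∈ M, w ∈ e ∧ e ∉ f)) with hQdef
  have hpent : ∀ f ∈ pentFaces P E, f ∈ P.faces ∧ f.card = 5 ∧ f ⊆ E := by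
    intro f hf
    rcases Finset.mem_filter.mp hf with ⟨h1, h2, h3⟩
    exact ⟨h1, h2, h3⟩
  -- existence of witnesses
  have hwit : ∀ f ∈ pentFaces P E, ∃ w, Q f w := by
    intro f hf
    rcases hpent f hf with ⟨hface, h5, hfE⟩
    have hodd : Odd ((edgeVerts f \ facesVerts H).card) :=
      pentagon_odd P hP hface h5 hHfaces' hHdisj
    have hUf : ∀ w ∈ edgeVerts f \ facesVerts H, w ∈ Uset E H := by
      intro w hw
      rcases Finset.mem_sdiff.mp hw with ⟨hw1, hw2⟩
      exact Finset.mem_sdiff.mpr ⟨edgeVerts_mono hfE hw1, hw2⟩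
    by_cases hcase : ∃ w ∈ edgeVerts f \ facesVerts H, deg E w ≤ 2
    · obtain ⟨w, hwWf, hdeg2⟩ := hcase
      refine ⟨w, hUf w hwWf, (Finset.mem_sdiff.mp hwWf).1, Or.inl ?_⟩
      intro g hg hwg
      rcases hpent g hg with ⟨hgface, hg5, hgE⟩
      have hfpair : f.filter (fun e => w ∈ e) = E.filter (fun e => w ∈ e) := by
        apply Finset.eq_of_subset_of_card_le (Finset.filter_subset_filter _ hfE)
        have h2f : (f.filter (fun e => w ∈ e)).card = 2 :=
          face_deg_two P hface (Finset.mem_sdiff.mp hwWf).1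
        have : deg E w ≤ 2 := hdeg2
        unfold deg at this
        omega
      have hgpair : g.filter (fun e => w ∈ e) = E.filter (fun e => w ∈ e) := by
        apply Finset.eq_of_subset_of_card_le (Finset.filter_subset_filter _ hgE)
        have h2g : (g.filter (fun e => w ∈ e)).card = 2 := face_deg_two P hgface hwg
        have : deg E w ≤ 2 := hdeg2
        unfold deg at this
        omega
      exact pair_determines P hP hgface hface hwg (Finset.mem_sdiff.mp hwWf).1
        (hgpair.trans hfpair.symm)
    · push_neg at hcase
      have hdeg3 : ∀ w ∈ edgeVerts f \ facesVerts H, deg E w = 3 := by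
        intro w hw
        have hge := hcase w hw
        have hle : deg E w ≤ 3 := by
          have hsub : E ⊆ P.graph.edgeFinset := fun e he =>
            SimpleGraph.mem_edgeFinset.mpr (hE e he)
          have h3 : deg P.graph.edgeFinset w = 3 :=
            vertex_edges_three P hP w (T := P.graph.edgeFinset.filter (fun e => w ∈ e))
              (fun e => by simp [SimpleGraph.mem_edgeFinset])
          rw [← h3]
          exact deg_mono hsub w
        omega
      have hmatched : ∀ w ∈ edgeVerts f \ facesVerts H, ∃ e ∈ M, w ∈ e := by
        intro w hw
        rcases Finset.mem_sdiff.mp hw with ⟨hw1, hw2⟩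
        exact hMcover w (edgeVerts_mono hfE hw1) (hdeg3 w hw) hw2
      by_cases hcase2 : ∃ w ∈ edgeVerts f \ facesVerts H, ∃ e ∈ M, w ∈ e ∧ e ∉ f
      · obtain ⟨w, hwWf, he⟩ := hcase2
        exact ⟨w, hUf w hwWf, (Finset.mem_sdiff.mp hwWf).1, Or.inr he⟩
      · exfalso
        push_neg at hcase2
        have heq : edgeVerts f \ facesVerts H = edgeVerts (M ∩ f) := by
          ext w
          constructor
          · intro hw
            obtain ⟨e, heM, hwe⟩ := hmatched w hw
            have hef : e ∈ f := hcase2 w hw e heM hwe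
            exact mem_edgeVerts.mpr ⟨e, Finset.mem_inter.mpr ⟨heM, hef⟩, hwe⟩
          · intro hw
            obtain ⟨e, heMf, hwe⟩ := mem_edgeVerts.mp hw
            rcases Finset.mem_inter.mp heMf with ⟨heM, hef⟩
            exact Finset.mem_sdiff.mpr
              ⟨mem_edgeVerts.mpr ⟨e, hef, hwe⟩, hMavoid e heM w hwe⟩
        have hnd : ∀ e ∈ M ∩ f, ¬ e.IsDiag := fun e he =>
          hMmatch.1 e (Finset.mem_inter.mp he).1
        have hone : ∀ w ∈ edgeVerts (M ∩ f), deg (M ∩ f) w = 1 := by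
          intro w hw
          obtain ⟨e, heMf, hwe⟩ := mem_edgeVerts.mp hw
          have hle : ((M ∩ f).filter (fun e => w ∈ e)).card ≤ 1 := by
            apply Finset.card_le_one.mpr
            intro a ha b hb
            rcases Finset.mem_filter.mp ha with ⟨haM, hwa⟩
            rcases Finset.mem_filter.mp hb with ⟨hbM, hwb⟩
            by_contra hab
            exact hMmatch.2 a (Finset.mem_inter.mp haM).1 b (Finset.mem_inter.mp hbM).1
              hab w hwa hwb
          have hge : 1 ≤ ((M ∩ f).filter (fun e => w ∈ e)).card := by
            rw [Nat.one_le_iff_ne_zero, ← Nat.pos_iff_ne_zero, Finset.card_pos]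
            exact ⟨e, Finset.mem_filter.mpr ⟨heMf, hwe⟩⟩
          unfold deg
          omega
        have hcard := card_edgeVerts hnd hone
        rw [← heq] at hcard
        rw [Nat.odd_iff] at hodd
        omega
  -- injectivity of witnesses
  have hinj : ∀ f ∈ pentFaces P E, ∀ g ∈ pentFaces P E, ∀ w, Q f w → Q g w → f = g := by
    intro f hf g hg w hQf hQg
    rcases hQf with ⟨hwU, hwf, hbf⟩
    rcases hQg with ⟨-, hwg, hbg⟩
    rcases hbf with hbf | ⟨e, heM, hwe, hef⟩
    · exact (hbf g hg hwg).symm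
    · rcases hbg with hbg | ⟨e', he'M, hwe', he'g⟩
      · exact hbg f hf hwf
      · have hee' : e = e' := by
          by_contra hne
          exact hMmatch.2 e heM e' he'M hne w hwe hwe'
        subst hee'
        have hFw3 : (P.faces.filter (fun X => w ∈ edgeVerts X)).card = 3 :=
          faces_at_three P hP w
        have hFe2 : (P.faces.filter (fun X => e ∈ X)).card = 2 :=
          P.edge_faces e (hE e (hME heM))
        have hFeFw : P.faces.filter (fun X => e ∈ X)
            ⊆ P.faces.filter (fun X => w ∈ edgeVerts X) := by
          intro X hX
          rcases Finset.mem_filter.mp hX with ⟨hXf, heX⟩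
          exact Finset.mem_filter.mpr ⟨hXf, mem_edgeVerts.mpr ⟨e, heX, hwe⟩⟩
        have hsd : ((P.faces.filter (fun X => w ∈ edgeVerts X))
            \ (P.faces.filter (fun X => e ∈ X))).card = 1 := by
          rw [Finset.card_sdiff_of_subset hFeFw, hFw3, hFe2]
        obtain ⟨X, hX⟩ := Finset.card_eq_one.mp hsd
        have hfX : f ∈ ({X} : Finset (Finset (Sym2 V))) := by
          rw [← hX]
          refine Finset.mem_sdiff.mpr ⟨Finset.mem_filter.mpr ⟨(hpent f hf).1, hwf⟩, ?_⟩
          intro hmem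
          exact hef (Finset.mem_filter.mp hmem).2
        have hgX : g ∈ ({X} : Finset (Finset (Sym2 V))) := by
          rw [← hX]
          refine Finset.mem_sdiff.mpr ⟨Finset.mem_filter.mpr ⟨(hpent g hg).1, hwg⟩, ?_⟩
          intro hmem
          exact he'g (Finset.mem_filter.mp hmem).2
        rw [Finset.mem_singleton.mp hfX, Finset.mem_singleton.mp hgX]
  -- assemble via an injection
  rcases (pentFaces P E).eq_empty_or_nonempty with hPe | ⟨f0, hf0⟩
  · rw [hPe]
    simp
  · obtain ⟨w0, -⟩ := hwit f0 hf0
    have hchoice : ∀ f : Finset (Sym2 V), ∃ w, f ∈ pentFaces P E → Q f w := by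
      intro f
      by_cases hf : f ∈ pentFaces P E
      · obtain ⟨w, hw⟩ := hwit f hf
        exact ⟨w, fun _ => hw⟩
      · exact ⟨w0, fun h => absurd h hf⟩
    choose φ hφ using hchoice
    apply Finset.card_le_card_of_injOn φ
    · intro f hf
      exact (hφ f hf).1
    · intro f hf g hg heqφ
      have hf' : f ∈ pentFaces P E := Finset.mem_coe.mp hf
      have hg' : g ∈ pentFaces P E := Finset.mem_coe.mp hg
      refine hinj f hf' g hg' (φ f) (hφ f hf') ?_
      rw [heqφ]
      exact hφ g hg' 

end FG
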